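/- Let $\mathfrak{p}\subseteq\mathfrak{g}$ be a parabolic subalgebra of a complex semisimple Lie algebra, with nilpotent radical $\mathfrak{u}$ and chosen Levi factor $\mathfrak{l}$, and let $x\in\mathfrak{p}$ satisfy $\mathfrak{g}_x\cap\mathfrak{u}=\{0\}$, where $\mathfrak{g}_x$ denotes the centralizer of $x$ in $\mathfrak{g}$. Write $x=x_{\mathfrak{l}}+x_{\mathfrak{u}}$ with $x_{\mathfrak{l}}\in\mathfrak{l}$ and $x_{\mathfrak{u}}\in\mathfrak{u}$. Then $x+\mathfrak{u}=x_{\mathfrak{l}}+\mathfrak{u}=Ux$ is a single orbit of the unipotent group $U=\exp(\mathfrak{u})$. -/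

import Mathlib

open Module

namespace MF

section ModuleDefs

variable (V : Type) [AddCommGroup V] [Module ℂ V]

/-- A complex-valued polynomial function on a finite-dimensional complex vector space. -/
def IsPolyFun (f : V → ℂ) : Prop :=
  ∃ (n : ℕ) (b : Basis (Fin n) ℂ V) (p : MvPolynomial (Fin n) ℂ),
    ∀ x, f x = MvPolynomial.eval (fun i => b.repr x i) p

/-- An algebraic subset: the common zero locus of a family of polynomial functions. -/
def IsAlgebraicSet (S : Set V) : Prop :=
  ∃ T : Set (V → ℂ), (∀ f ∈ T, IsPolyFun V f) ∧ S = {x | ∀ f ∈ T, f x = 0}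

/-- An irreducible algebraic subset. -/
def IsIrreducibleAlg (S : Set V) : Prop :=
  IsAlgebraicSet V S ∧ S.Nonempty ∧
    ∀ A B : Set V, IsAlgebraicSet V A → IsAlgebraicSet V B → S ⊆ A ∪ B → S ⊆ A ∨ S ⊆ B

/-- An irreducible component of `W`: a maximal irreducible algebraic subset of `W`. -/
def IsIrrComponentOf (W S : Set V) : Prop :=
  IsIrreducibleAlg V S ∧ S ⊆ W ∧
    ∀ T : Set V, IsIrreducibleAlg V T → T ⊆ W → S ⊆ T → S = T

/-- Zariski closure. -/
def algClosure (S : Set V) : Set V := ⋂₀ {T : Set V | IsAlgebraicSet V T ∧ S ⊆ T}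

/-- Dimension of an algebraic set, via chains of irreducible algebraic subsets. -/
noncomputable def algDim (S : Set V) : WithBot ℕ∞ :=
  Order.krullDim {T : Set V // IsIrreducibleAlg V T ∧ T ⊆ S}

/-- Local dimension of an algebraic set at a point. -/
noncomputable def algDimAt (S : Set V) (x : V) : WithBot ℕ∞ :=
  Order.krullDim {T : Set V // IsIrreducibleAlg V T ∧ T ⊆ S ∧ x ∈ T}

/-- The (embedded Zariski) tangent space dimension of `W` at `p`. -/
noncomputable def tangentDim (W : Set V) (p : V) : ℕ :=
  Module.finrank ℂ (Submodule.span ℂ {v : V | ∀ f : V → ℂ, IsPolyFun V f →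
    (∀ q ∈ W, f q = 0) → deriv (fun t : ℂ => f (p + t • v)) 0 = 0})

/-- A singular point of the algebraic set `W`: a point of `W` at which the Zariski tangent
space dimension differs from the local dimension. -/
def IsSingularPointOf (W : Set V) (p : V) : Prop :=
  p ∈ W ∧ ((tangentDim V W p : ℕ∞) : WithBot ℕ∞) ≠ algDimAt V W p

end ModuleDefs

section LieDefs

variable (L : Type) [LieRing L] [LieAlgebra ℂ L]

/-- Truncated exponential of an endomorphism; agrees with `exp` on nilpotent endomorphisms. -/
noncomputable def expNil (g : Module.End ℂ L) : Module.End ℂ L :=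
  ∑ k ∈ Finset.range (Module.finrank ℂ L + 1), ((k.factorial : ℂ))⁻¹ • g ^ k

/-- Invariance under the adjoint group (which is generated by the exponentials of the
nilpotent inner derivations). -/
def AdInvariant (f : L → ℂ) : Prop :=
  ∀ y : L, IsNilpotent (LieAlgebra.ad ℂ L y) →
    ∀ x, f (expNil L (LieAlgebra.ad ℂ L y) x) = f x

/-- A regular element: one whose centralizer has minimal dimension. -/
def IsRegularElt (x : L) : Prop :=
  ∀ y : L, finrank ℂ (LinearMap.ker (LieAlgebra.ad ℂ L x)) ≤
    finrank ℂ (LinearMap.ker (LieAlgebra.ad ℂ L y))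

/-- A Borel subalgebra: a maximal solvable subalgebra. -/
def IsBorel (b : LieSubalgebra ℂ L) : Prop :=
  LieAlgebra.IsSolvable b ∧
    ∀ c : LieSubalgebra ℂ L, LieAlgebra.IsSolvable c → b ≤ c → b = c

/-- A parabolic subalgebra: one containing a Borel subalgebra. -/
def IsParabolic (p : LieSubalgebra ℂ L) : Prop :=
  ∃ b : LieSubalgebra ℂ L, IsBorel L b ∧ b ≤ p

/-- `u` is the nilpotent radical (the largest nilpotent ideal) of `p`. -/
def IsNilradicalOf (p u : LieSubalgebra ℂ L) : Prop :=
  u ≤ p ∧ (∀ x ∈ p, ∀ y ∈ u, ⁅x, y⁆ ∈ u) ∧ LieRing.IsNilpotent u ∧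
    ∀ v : LieSubalgebra ℂ L, v ≤ p → (∀ x ∈ p, ∀ y ∈ v, ⁅x, y⁆ ∈ v) →
      LieRing.IsNilpotent v → v ≤ u

/-- `l` is a Levi factor of the parabolic `p` with nilpotent radical `u`, i.e.
`p = l ⊕ u` as vector spaces, with `l` a subalgebra. -/
def IsLeviFactorOf (p u l : LieSubalgebra ℂ L) : Prop :=
  l ≤ p ∧ l ⊓ u = ⊥ ∧ ∀ x ∈ p, ∃ y ∈ l, ∃ z ∈ u, x = y + z

/-- The intersection of all Borel subalgebras containing `a` (as a subset of `L`). -/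
def borelIntersection (a : L) : Set L :=
  ⋂₀ {S : Set L | ∃ b : LieSubalgebra ℂ L, IsBorel L b ∧ a ∈ b ∧ S = ↑b}

/-- The centralizer of an element, as a Lie subalgebra. -/
def zentralizer (s : L) : LieSubalgebra ℂ L where
  carrier := {y | ⁅s, y⁆ = 0}
  add_mem' := by intro a b ha hb; simp only [Set.mem_setOf_eq] at *; rw [lie_add, ha, hb, add_zero]
  zero_mem' := by simp
  smul_mem' := by intro c y hy; simp only [Set.mem_setOf_eq] at *; rw [lie_smul, hy, smul_zero]
  lie_mem' := by
    intro a b ha hb; simp only [Set.mem_setOf_eq] at *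
    rw [leibniz_lie, ha, hb, zero_lie, lie_zero, add_zero]

end LieDefs

section Orbits

variable {L : Type} [LieRing L] [LieAlgebra ℂ L]

/-- The adjoint group, realized as products of exponentials of nilpotent inner derivations. -/
def InnerEnd (L : Type) [LieRing L] [LieAlgebra ℂ L] : Set (Module.End ℂ L) :=
  {φ | ∃ l : List L, (∀ y ∈ l, IsNilpotent (LieAlgebra.ad ℂ L y)) ∧
        φ = (l.map fun y => expNil L (LieAlgebra.ad ℂ L y)).prod}

/-- The adjoint orbit of `x`. -/
def adjointOrbit (x : L) : Set L := {y | ∃ φ ∈ InnerEnd L, y = φ x}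

end Orbits

section MFMap

variable (L : Type) [LieRing L] [LieAlgebra ℂ L]

/-- A system of homogeneous, algebraically independent generators of the algebra of
invariant polynomial functions. -/
structure InvGens where
  r : ℕ
  d : Fin r → ℕ
  f : Fin r → L → ℂ
  poly : ∀ i, IsPolyFun L (f i)
  invariant : ∀ i, AdInvariant L (f i)
  homog : ∀ i (c : ℂ) x, f i (c • x) = c ^ d i * f i x
  generates : ∀ g, IsPolyFun L g → AdInvariant L g →
      ∃ p : MvPolynomial (Fin r) ℂ, ∀ x, g x = MvPolynomial.eval (fun i => f i x) p
  indep : ∀ p : MvPolynomial (Fin r) ℂ,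
      (∀ x, MvPolynomial.eval (fun i => f i x) p = 0) → p = 0

/-- The data of the Mishchenko–Fomenko map associated with `a`: the coefficients `F i j`
of the expansion of `fᵢ(x + λ a)` in powers of `λ`. -/
structure MFData (a : L) extends InvGens L where
  F : Fin r → ℕ → L → ℂ
  expansion : ∀ i x (lam : ℂ),
    f i (x + lam • a) = f i a * lam ^ d i + ∑ j ∈ Finset.range (d i), F i j x * lam ^ j

variable {L}

/-- Index type for the components of the Mishchenko–Fomenko map. -/
abbrev MFData.B {a : L} (Φ : MFData L a) : Type := (i : Fin Φ.r) × Fin (Φ.d i)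

/-- The Mishchenko–Fomenko map. -/
def MFData.map {a : L} (Φ : MFData L a) (x : L) : Φ.B → ℂ := fun ij => Φ.F ij.1 ij.2 x

/-- Fibre of the Mishchenko–Fomenko map through `x`. -/
def MFData.fiber {a : L} (Φ : MFData L a) (x : L) : Set L := {y | Φ.map y = Φ.map x}

end MFMap

end MF

/-- Orbit of the unipotent group `U = exp 𝔲`. -/
def Uorbit {L : Type} [LieRing L] [LieAlgebra ℂ L] (u : LieSubalgebra ℂ L) (x : L) :
    Set L :=
  {z | ∃ y ∈ u, z = MF.expNil L (LieAlgebra.ad ℂ L y) x}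

namespace MFAux

open MF LieAlgebra

variable {L : Type} [LieRing L] [LieAlgebra ℂ L]

/-- Filtration: F 0 = u, F (k+1) = span ⁅u, F k⁆. -/
def FF (u : LieSubalgebra ℂ L) : ℕ → Submodule ℂ L
  | 0 => u.toSubmodule
  | k + 1 => Submodule.span ℂ {z | ∃ a ∈ u, ∃ b ∈ FF u k, z = ⁅a, b⁆}

lemma lie_mem_FF {u : LieSubalgebra ℂ L} {k : ℕ} {a b : L} (ha : a ∈ u) (hb : b ∈ FF u k) :
    ⁅a, b⁆ ∈ FF u (k + 1) :=
  Submodule.subset_span ⟨a, ha, b, hb, rfl⟩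

lemma FF_le (u : LieSubalgebra ℂ L) : ∀ k, FF u k ≤ u.toSubmodule
  | 0 => le_rfl
  | k + 1 => by
    refine Submodule.span_le.2 ?_
    rintro z ⟨a, ha, b, hb, rfl⟩
    exact u.lie_mem ha (FF_le u k hb)

lemma FF_succ_le (u : LieSubalgebra ℂ L) : ∀ k, FF u (k + 1) ≤ FF u k
  | 0 => FF_le u 1
  | k + 1 => by
    refine Submodule.span_le.2 ?_
    rintro z ⟨a, ha, b, hb, rfl⟩
    exact lie_mem_FF ha (FF_succ_le u k hb)

section Main

variable {u p : LieSubalgebra ℂ L} {x : L}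
  (hx : x ∈ p) (hup : u ≤ p) (hid : ∀ a ∈ p, ∀ b ∈ u, ⁅a, b⁆ ∈ u)

include hx hid in
lemma lie_x_FF : ∀ k, ∀ b ∈ FF u k, ⁅x, b⁆ ∈ FF u k
  | 0 => fun b hb => hid x hx b hb
  | k + 1 => fun b hb => by
    induction hb using Submodule.span_induction with
    | mem z hz =>
      obtain ⟨a, ha, w, hw, rfl⟩ := hz
      rw [leibniz_lie]
      exact add_mem (lie_mem_FF (hid x hx a ha) hw) (lie_mem_FF ha (lie_x_FF k w hw))
    | zero => simp
    | add w₁ w₂ h₁ h₂ ih₁ ih₂ => rw [lie_add]; exact add_mem ih₁ ih₂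
    | smul c w hw ih => rw [lie_smul]; exact Submodule.smul_mem _ _ ih

lemma FF_sub_lcs (u : LieSubalgebra ℂ L) :
    ∀ k, ∀ z (hz : z ∈ u), z ∈ FF u k → (⟨z, hz⟩ : u) ∈ LieModule.lowerCentralSeries ℂ u u k
  | 0 => fun z hz _ => LieSubmodule.mem_top _
  | k + 1 => fun z hz hzF => by
    revert hz
    induction hzF using Submodule.span_induction with
    | mem w hw =>
      obtain ⟨a, ha, b, hb, rfl⟩ := hw
      intro hz
      have hb' : b ∈ u := FF_le u k hb
      have hlcs : (⟨b, hb'⟩ : u) ∈ LieModule.lowerCentralSeries ℂ u u k := FF_sub_lcs u k b hb' hb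
      have : (⟨⁅a, b⁆, hz⟩ : u) = ⁅(⟨a, ha⟩ : u), (⟨b, hb'⟩ : u)⁆ := rfl
      rw [this, LieModule.lowerCentralSeries_succ]
      exact LieSubmodule.lie_mem_lie (LieSubmodule.mem_top _) hlcs
    | zero =>
      intro hz
      have : (⟨(0 : L), hz⟩ : u) = 0 := rfl
      rw [this]; exact (LieModule.lowerCentralSeries ℂ u u (k + 1)).zero_mem
    | add w₁ w₂ h₁ h₂ ih₁ ih₂ =>
      intro hz
      have hw₁ : w₁ ∈ u := FF_le u (k + 1) h₁
      have hw₂ : w₂ ∈ u := FF_le u (k + 1) h₂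
      have : (⟨w₁ + w₂, hz⟩ : u) = ⟨w₁, hw₁⟩ + ⟨w₂, hw₂⟩ := rfl
      rw [this]
      exact add_mem (ih₁ hw₁) (ih₂ hw₂)
    | smul c w hw ih =>
      intro hz
      have hw' : w ∈ u := FF_le u (k + 1) hw
      have : (⟨c • w, hz⟩ : u) = c • (⟨w, hw'⟩ : u) := rfl
      rw [this]
      exact Submodule.smul_mem _ _ (ih hw')

lemma FF_eq_bot_of_nilpotent (u : LieSubalgebra ℂ L) (hnil : LieRing.IsNilpotent u) :
    ∃ N, FF u N = ⊥ := by
  obtain ⟨N, hN⟩ := (LieModule.isNilpotent_iff ℂ u u).mp hnil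
  refine ⟨N, le_antisymm ?_ bot_le⟩
  intro z hz
  have hz' : z ∈ u := FF_le u N hz
  have := FF_sub_lcs u N z hz' hz
  rw [hN] at this
  have : (⟨z, hz'⟩ : u) = 0 := this
  simpa using congrArg Subtype.val this

variable (hcent : ∀ y : L, y ∈ u → ⁅x, y⁆ = 0 → y = 0)

include hx hid hcent in
lemma FF_surj [Module.Finite ℂ L] (k : ℕ) :
    ∀ v ∈ FF u k, ∃ w ∈ FF u k, ⁅x, w⁆ = v := by
  set f : FF u k →ₗ[ℂ] FF u k :=
    (LieAlgebra.ad ℂ L x).restrict (fun w hw => lie_x_FF hx hid k w hw)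
  have hinj : Function.Injective f := by
    rw [← LinearMap.ker_eq_bot]
    refine (Submodule.eq_bot_iff _).2 fun w hw => ?_
    have : ⁅x, (w : L)⁆ = 0 := by
      have := congrArg Subtype.val hw
      exact this
    exact Subtype.ext (hcent _ (FF_le u k w.2) this)
  have hsurj := LinearMap.injective_iff_surjective.mp hinj
  intro v hv
  obtain ⟨w, hw⟩ := hsurj ⟨v, hv⟩
  refine ⟨w, w.2, ?_⟩
  have := congrArg Subtype.val hw
  exact this

include hx hid hup in
lemma ad_pow_mem {y : L} (hy : y ∈ u) : ∀ m : ℕ, ((ad ℂ L y) ^ (m + 1)) x ∈ u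
  | 0 => by
    have h1 : ((ad ℂ L y) ^ 1) x = -⁅x, y⁆ := by
      rw [pow_one, ad_apply, ← lie_skew]
    rw [h1]
    exact u.neg_mem (hid x hx y hy)
  | m + 1 => by
    have : ((ad ℂ L y) ^ (m + 2)) x = ⁅y, ((ad ℂ L y) ^ (m + 1)) x⁆ := by
      rw [pow_succ']
      simp [Module.End.mul_apply, ad_apply]
    rw [this]
    exact u.lie_mem hy (ad_pow_mem hy m)

lemma expNil_apply (g : Module.End ℂ L) (z : L) :
    expNil L g z = ∑ m ∈ Finset.range (Module.finrank ℂ L + 1), ((m.factorial : ℂ))⁻¹ • (g ^ m) z := by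
  simp [expNil, LinearMap.sum_apply, LinearMap.smul_apply]

lemma expNil_zero_apply (z : L) : expNil L (ad ℂ L (0 : L)) z = z := by
  rw [map_zero, expNil_apply]
  rw [Finset.sum_eq_single 0]
  · simp
  · intro m _ hm
    rw [zero_pow hm]
    simp
  · simp

include hx hup hid in
lemma expNil_sub_mem {y : L} (hy : y ∈ u) : expNil L (ad ℂ L y) x - x ∈ u := by
  rw [expNil_apply]
  have key : ∀ m ∈ Finset.range (Module.finrank ℂ L + 1),
      ((m.factorial : ℂ))⁻¹ • ((ad ℂ L y) ^ m) x - (if m = 0 then x else 0) ∈ u.toSubmodule := by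
    intro m _
    match m with
    | 0 => simp
    | m + 1 =>
      simp only [if_neg (Nat.succ_ne_zero m), sub_zero]
      exact Submodule.smul_mem _ _ (ad_pow_mem hx hup hid hy m)
  have hsum := Submodule.sum_mem _ key
  rw [Finset.sum_sub_distrib, Finset.sum_ite_eq' (Finset.range (Module.finrank ℂ L + 1)) 0
    (fun _ => x)] at hsum
  simpa [Finset.mem_range] using hsum

include hx hup hid hcent in
lemma main_approx [Module.Finite ℂ L] (hn : 1 ≤ Module.finrank ℂ L) :
    ∀ k, ∀ v ∈ u, ∃ y ∈ u, expNil L (ad ℂ L y) x - (x + v) ∈ FF u k := by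
  intro k
  induction k with
  | zero =>
    intro v hv
    refine ⟨0, u.zero_mem, ?_⟩
    rw [expNil_zero_apply]
    have : x - (x + v) = -v := by abel
    rw [this]
    exact Submodule.neg_mem _ hv
  | succ k ih =>
    intro v hv
    obtain ⟨y, hy, he⟩ := ih v hv
    set e : L := expNil L (ad ℂ L y) x - (x + v) with he_def
    obtain ⟨c, hc, hcx⟩ := FF_surj hx hid hcent k e he
    have hcu : c ∈ u := FF_le u k hc
    set y' : L := y + c with hy'_def
    have hy' : y' ∈ u := u.add_mem hy hcu
    set D : ℕ → L := fun m => ((ad ℂ L y') ^ m) x - ((ad ℂ L y) ^ m) x with hD_def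
    have hD1 : D 1 = ⁅c, x⁆ := by
      simp only [hD_def, pow_one, ad_apply, hy'_def, add_lie]
      abel
    have hDrec : ∀ m, D (m + 1) = ⁅y', D m⁆ + ⁅c, ((ad ℂ L y) ^ m) x⁆ := by
      intro m
      have h1 : ((ad ℂ L y') ^ (m + 1)) x = ⁅y', ((ad ℂ L y') ^ m) x⁆ := by
        rw [pow_succ']; simp [Module.End.mul_apply, ad_apply]
      have h2 : ((ad ℂ L y) ^ (m + 1)) x = ⁅y, ((ad ℂ L y) ^ m) x⁆ := by
        rw [pow_succ']; simp [Module.End.mul_apply, ad_apply]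
      simp only [hD_def, h1, h2, lie_sub]
      simp only [hy'_def, add_lie]
      abel
    have hcxFk : ⁅c, x⁆ ∈ FF u k := by
      rw [← lie_skew]
      exact Submodule.neg_mem _ (lie_x_FF hx hid k c hc)
    have hDFk : ∀ m, D (m + 1) ∈ FF u k := by
      intro m
      induction m with
      | zero => rw [hD1]; exact hcxFk
      | succ m ihm =>
        rw [hDrec (m + 1)]
        refine add_mem (FF_succ_le u k (lie_mem_FF hy' ihm)) ?_
        rw [← lie_skew]
        exact Submodule.neg_mem _ (FF_succ_le u k
          (lie_mem_FF (ad_pow_mem hx hup hid hy m) hc))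
    have hDF1 : ∀ m, D (m + 2) ∈ FF u (k + 1) := by
      intro m
      rw [hDrec (m + 1)]
      refine add_mem (lie_mem_FF hy' (hDFk m)) ?_
      rw [← lie_skew]
      exact Submodule.neg_mem _ (lie_mem_FF (ad_pow_mem hx hup hid hy m) hc)
    refine ⟨y', hy', ?_⟩
    have hsum : expNil L (ad ℂ L y') x - expNil L (ad ℂ L y) x
        = ∑ m ∈ Finset.range (Module.finrank ℂ L + 1), ((m.factorial : ℂ))⁻¹ • D m := by
      rw [expNil_apply, expNil_apply, ← Finset.sum_sub_distrib]
      refine Finset.sum_congr rfl fun m _ => ?_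
      rw [hD_def, smul_sub]
    have key : ∀ m ∈ Finset.range (Module.finrank ℂ L + 1),
        ((m.factorial : ℂ))⁻¹ • D m - (if m = 1 then ⁅c, x⁆ else 0) ∈ FF u (k + 1) := by
      intro m _
      match m with
      | 0 => simp [hD_def]
      | 1 => simp [hD1]
      | m + 2 =>
        simp only [if_neg (by omega : ¬ m + 2 = 1), sub_zero]
        exact Submodule.smul_mem _ _ (hDF1 m)
    have hS := Submodule.sum_mem _ key
    rw [Finset.sum_sub_distrib, Finset.sum_ite_eq' (Finset.range (Module.finrank ℂ L + 1)) 1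
      (fun _ => ⁅c, x⁆), if_pos (by simpa [Finset.mem_range] using by omega : (1 : ℕ) ∈ Finset.range (Module.finrank ℂ L + 1))] at hS
    rw [← hsum] at hS
    have hfinal : expNil L (ad ℂ L y') x - (x + v)
        = (expNil L (ad ℂ L y') x - expNil L (ad ℂ L y) x - ⁅c, x⁆) + (⁅c, x⁆ + e) := by
      rw [he_def]; abel
    have hzero : ⁅c, x⁆ + e = 0 := by
      rw [← hcx, ← lie_skew x c]; abel
    rw [hfinal, hzero, add_zero]
    exact hS

include hx hup hid hcent in
lemma coset_eq_orbit [Module.Finite ℂ L] (hnil : LieRing.IsNilpotent u) :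
    {z | ∃ v ∈ u, z = x + v} = Uorbit u x := by
  rcases Nat.eq_zero_or_pos (Module.finrank ℂ L) with h0 | hn
  · have : Subsingleton L := Module.finrank_zero_iff.mp h0
    ext z
    constructor
    · rintro ⟨v, hv, rfl⟩
      exact ⟨0, u.zero_mem, Subsingleton.elim _ _⟩
    · rintro ⟨y, hy, rfl⟩
      exact ⟨0, u.zero_mem, Subsingleton.elim _ _⟩
  · ext z
    constructor
    · rintro ⟨v, hv, rfl⟩
      obtain ⟨N, hN⟩ := FF_eq_bot_of_nilpotent u hnil
      obtain ⟨y, hy, hmem⟩ := main_approx hx hup hid hcent hn N v hv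
      rw [hN, Submodule.mem_bot, sub_eq_zero] at hmem
      exact ⟨y, hy, hmem.symm⟩
    · rintro ⟨y, hy, rfl⟩
      have := expNil_sub_mem hx hup hid hy
      exact ⟨expNil L (ad ℂ L y) x - x, this, by abel⟩

end Main

end MFAux

theorem statement1 (L : Type) [LieRing L] [LieAlgebra ℂ L] [Module.Finite ℂ L]
    [LieAlgebra.IsSemisimple ℂ L]
    (p u l : LieSubalgebra ℂ L) (hp : MF.IsParabolic L p)
    (hu : MF.IsNilradicalOf L p u) (hl : MF.IsLeviFactorOf L p u l)
    (x : L) (hx : x ∈ p)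
    (hcent : ∀ y : L, y ∈ u → ⁅x, y⁆ = 0 → y = 0)
    (xl xu : L) (hxl : xl ∈ l) (hxu : xu ∈ u) (hsum : x = xl + xu) :
    {z | ∃ v ∈ u, z = x + v} = {z | ∃ v ∈ u, z = xl + v} ∧
      {z | ∃ v ∈ u, z = x + v} = Uorbit u x := by
  have hup : u ≤ p := hu.1
  have hid := hu.2.1
  have hnil := hu.2.2.1
  constructor
  · ext z
    constructor
    · rintro ⟨v, hv, rfl⟩
      exact ⟨xu + v, u.add_mem hxu hv, by rw [hsum]; abel⟩
    · rintro ⟨v, hv, rfl⟩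
      refine ⟨v - xu, sub_mem hv hxu, ?_⟩
      rw [hsum]; abel
  · exact MFAux.coset_eq_orbit hx hup hid hcent hnil
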